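/- Let P* ⊂ ℝ³ be the polytope with vertices (1,0,0), (1,−1,0), (1,0,−1), (−1,2,2), (−1,−3,2), (−1,2,−3). Then the barycenter b(P*) satisfies ⟨b(P*), (1,0,0)⟩ < 0. -/

import Mathlib

open MeasureTheory Set

@[simp] lemma cons_val_five {α : Type*} (a : α) (u : Fin 5 → α) : Matrix.vecCons a u 5 = u 4 := rfl

noncomputable def wvec (s y z : ℝ) : Fin 6 → ℝ :=
  ![(1 + y + z)/(3 - 2*s) * ((1 + s)/2),
    (1 - s - y)/(3 - 2*s) * ((1 + s)/2),
    (1 - s - z)/(3 - 2*s) * ((1 + s)/2),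
    (1 + y + z)/(3 - 2*s) * ((1 - s)/2),
    (1 - s - y)/(3 - 2*s) * ((1 - s)/2),
    (1 - s - z)/(3 - 2*s) * ((1 - s)/2)]

def vmat : Fin 6 → Fin 3 → ℝ :=
  ![![1, 0, 0], ![1, -1, 0], ![1, 0, -1], ![-1, 2, 2], ![-1, -3, 2], ![-1, 2, -3]]

set_option maxHeartbeats 1000000 in
lemma wvec_sum (s y z : ℝ) (hd : (3:ℝ) - 2*s ≠ 0) : ∑ i, wvec s y z i = 1 := by
  simp [wvec, Fin.sum_univ_six, Matrix.vecHead, Matrix.vecTail]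
  field_simp
  ring

set_option maxHeartbeats 1000000 in
lemma combo (s y z : ℝ) (hd : (3:ℝ) - 2*s ≠ 0) :
    ∑ i, wvec s y z i • vmat i = ![s, y, z] := by
  funext j
  rw [Finset.sum_apply]
  have hd' : (3:ℝ) - s*2 ≠ 0 := by contrapose! hd; linarith
  fin_cases j <;>
  · simp [wvec, vmat, Fin.sum_univ_six, Matrix.vecHead, Matrix.vecTail]
    field_simp
    ring

def Sreg : Set (Fin 3 → ℝ) :=
  {x | -1 ≤ x 0 ∧ x 0 ≤ 1 ∧ x 1 ≤ 1 - x 0 ∧ x 2 ≤ 1 - x 0 ∧ -1 ≤ x 1 + x 2}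

lemma hull_eq : convexHull ℝ
      ({![1, 0, 0], ![1, -1, 0], ![1, 0, -1],
        ![-1, 2, 2], ![-1, -3, 2], ![-1, 2, -3]} : Set (Fin 3 → ℝ)) = Sreg := by
  apply le_antisymm
  · apply convexHull_min
    · intro v hv
      simp only [Set.mem_insert_iff, Set.mem_singleton_iff] at hv
      rcases hv with h|h|h|h|h|h <;> subst h <;>
        refine ⟨by simp <;> norm_num, by simp <;> norm_num, by simp <;> norm_num, by simp <;> norm_num, by simp <;> norm_num⟩
    · intro x hx y hy a b ha hb hab
      obtain ⟨h1,h2,h3,h4,h5⟩ := hx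
      obtain ⟨k1,k2,k3,k4,k5⟩ := hy
      refine ⟨?_,?_,?_,?_,?_⟩ <;> simp only [Pi.add_apply, Pi.smul_apply, smul_eq_mul] <;> nlinarith
  · intro p hp
    obtain ⟨h1,h2,h3,h4,h5⟩ := hp
    have hd : (0:ℝ) < 3 - 2 * p 0 := by linarith
    have hw0 : ∀ i ∈ Finset.univ, 0 ≤ wvec (p 0) (p 1) (p 2) i := by
      intro i _
      fin_cases i <;>
        exact mul_nonneg (div_nonneg (by linarith) hd.le) (by linarith)
    have hws := wvec_sum (p 0) (p 1) (p 2) hd.ne'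
    have hmem : ∀ i ∈ Finset.univ, vmat i ∈
        ({![1, 0, 0], ![1, -1, 0], ![1, 0, -1],
          ![-1, 2, 2], ![-1, -3, 2], ![-1, 2, -3]} : Set (Fin 3 → ℝ)) := by
      intro i _
      fin_cases i
      · exact Or.inl rfl
      · exact Or.inr (Or.inl rfl)
      · exact Or.inr (Or.inr (Or.inl rfl))
      · exact Or.inr (Or.inr (Or.inr (Or.inl rfl)))
      · exact Or.inr (Or.inr (Or.inr (Or.inr (Or.inl rfl))))
      · exact Or.inr (Or.inr (Or.inr (Or.inr (Or.inr rfl))))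
    have key := Finset.univ.centerMass_mem_convexHull hw0 (by rw [hws]; norm_num) hmem
    rw [Finset.centerMass_eq_of_sum_1 _ _ hws, combo _ _ _ hd.ne'] at key
    have hp3 : ![p 0, p 1, p 2] = p := by
      funext j; fin_cases j <;> rfl
    rwa [hp3] at key


def T3 : Set (ℝ × ℝ × ℝ) :=
  {p | -1 ≤ p.1 ∧ p.1 ≤ 1 ∧ p.2.1 ≤ 1 - p.1 ∧ p.2.2 ≤ 1 - p.1 ∧ -1 ≤ p.2.1 + p.2.2}

lemma T3_closed : IsClosed T3 := by
  have h : T3 = {p : ℝ×ℝ×ℝ | -1 ≤ p.1} ∩ ({p | p.1 ≤ 1} ∩ ({p | p.2.1 ≤ 1 - p.1} ∩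
      ({p | p.2.2 ≤ 1 - p.1} ∩ {p | -1 ≤ p.2.1 + p.2.2}))) := by
    ext p; simp [T3]
  rw [h]
  refine (isClosed_le continuous_const continuous_fst).inter
    ((isClosed_le continuous_fst continuous_const).inter
    ((isClosed_le (continuous_snd.fst) (by fun_prop)).inter
    ((isClosed_le (continuous_snd.snd) (by fun_prop)).inter
      (isClosed_le continuous_const (by fun_prop)))))

lemma T3_compact : IsCompact T3 := by
  refine IsCompact.of_isClosed_subset
    ((isCompact_Icc (a := (-1:ℝ)) (b := 1)).prod
      ((isCompact_Icc (a := (-3:ℝ)) (b := 2)).prod (isCompact_Icc (a := (-3:ℝ)) (b := 2))))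
    T3_closed ?_
  rintro ⟨x,y,z⟩ ⟨h1,h2,h3,h4,h5⟩
  simp only [Set.mem_prod, Set.mem_Icc]
  exact ⟨⟨h1,h2⟩, ⟨by linarith, by linarith⟩, ⟨by linarith, by linarith⟩⟩

lemma T3_meas : MeasurableSet T3 := T3_closed.measurableSet

lemma sect_integrable (x : ℝ) :
    Integrable (fun q : ℝ × ℝ => Set.indicator T3 (fun p : ℝ×ℝ×ℝ => p.1) (x, q)) := by
  have hsec_eq : (fun q : ℝ×ℝ => Set.indicator T3 (fun p : ℝ×ℝ×ℝ => p.1) (x, q))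
      = Set.indicator {q : ℝ×ℝ | (x, q) ∈ T3} (fun _ => x) := by
    funext q
    by_cases h : (x, q) ∈ T3 <;> simp [Set.indicator_apply, h]
  have hclosed : IsClosed {q : ℝ×ℝ | (x, q) ∈ T3} := T3_closed.preimage (Continuous.prodMk_right x)
  have hcpt : IsCompact {q : ℝ×ℝ | (x, q) ∈ T3} := by
    refine IsCompact.of_isClosed_subset
      ((isCompact_Icc (a := (-3:ℝ)) (b := 2)).prod (isCompact_Icc (a := (-3:ℝ)) (b := 2)))
      hclosed ?_
    rintro ⟨y,z⟩ ⟨h1,h2,h3,h4,h5⟩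
    simp only [Set.mem_prod, Set.mem_Icc]
    exact ⟨⟨by linarith, by linarith⟩, ⟨by linarith, by linarith⟩⟩
  rw [hsec_eq, integrable_indicator_iff hclosed.measurableSet]
  exact integrableOn_const hcpt.measure_lt_top.ne

lemma inner_int (x : ℝ) :
    (∫ q : ℝ × ℝ, Set.indicator T3 (fun p : ℝ×ℝ×ℝ => p.1) (x, q))
      = Set.indicator (Icc (-1:ℝ) 1) (fun t => t * (3 - 2*t)^2 / 2) x := by
  rw [Measure.volume_eq_prod, integral_prod _ ((Measure.volume_eq_prod ℝ ℝ) ▸ sect_integrable x)]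
  have hz : ∀ y : ℝ, (∫ z : ℝ, Set.indicator T3 (fun p : ℝ×ℝ×ℝ => p.1) (x, (y, z)))
      = if (-1 ≤ x ∧ x ≤ 1 ∧ y ≤ 1 - x) then x * max (2 - x + y) 0 else 0 := by
    intro y
    by_cases h : (-1 ≤ x ∧ x ≤ 1 ∧ y ≤ 1 - x)
    · have heq : (fun z : ℝ => Set.indicator T3 (fun p : ℝ×ℝ×ℝ => p.1) (x, (y, z)))
          = Set.indicator (Icc (-1 - y) (1 - x)) (fun _ => x) := by
        funext z
        simp only [Set.indicator_apply, T3, Set.mem_setOf_eq, Set.mem_Icc]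
        refine if_congr ⟨fun ⟨_,_,_,c4,c5⟩ => ⟨by linarith, c4⟩,
          fun ⟨b1,b2⟩ => ⟨h.1, h.2.1, h.2.2, b2, by linarith⟩⟩ rfl rfl
      rw [heq, integral_indicator measurableSet_Icc, setIntegral_const, Real.volume_real_Icc,
        smul_eq_mul, if_pos h,
        show (1:ℝ) - x - (-1 - y) = 2 - x + y by ring, mul_comm]
    · have heq : (fun z : ℝ => Set.indicator T3 (fun p : ℝ×ℝ×ℝ => p.1) (x, (y, z)))
          = fun _ => 0 := by
        funext z
        simp only [Set.indicator_apply, T3, Set.mem_setOf_eq]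
        rw [if_neg (by tauto)]
      rw [heq, integral_zero, if_neg h]
  simp_rw [hz]
  by_cases hx : -1 ≤ x ∧ x ≤ 1
  · have heq : (fun y : ℝ => if (-1 ≤ x ∧ x ≤ 1 ∧ y ≤ 1 - x) then x * max (2 - x + y) 0 else 0)
        = Set.indicator (Icc (x - 2) (1 - x)) (fun y => x * (2 - x + y)) := by
      funext y
      by_cases hy1 : y ≤ 1 - x
      · by_cases hy2 : x - 2 ≤ y
        · rw [if_pos ⟨hx.1, hx.2, hy1⟩, Set.indicator_of_mem (mem_Icc.2 ⟨hy2, hy1⟩),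
            max_eq_left (by linarith)]
        · rw [if_pos ⟨hx.1, hx.2, hy1⟩, Set.indicator_of_notMem (fun hmem =>
            hy2 (mem_Icc.1 hmem).1), max_eq_right (by linarith), mul_zero]
      · rw [if_neg (fun hc => hy1 hc.2.2), Set.indicator_of_notMem (fun hmem =>
          hy1 (mem_Icc.1 hmem).2)]
    rw [heq, integral_indicator measurableSet_Icc, integral_Icc_eq_integral_Ioc,
      ← intervalIntegral.integral_of_le (by linarith : x - 2 ≤ 1 - x)]
    have hrw : ∀ y : ℝ, x * (2 - x + y) = x * (2 - x) + x * y := fun y => by ring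
    simp_rw [hrw]
    rw [intervalIntegral.integral_add (intervalIntegrable_const)
      ((continuous_mul_left x).intervalIntegrable _ _),
      intervalIntegral.integral_const, intervalIntegral.integral_const_mul, integral_id,
      Set.indicator_of_mem (mem_Icc.2 hx), smul_eq_mul]
    ring
  · have heq : (fun y : ℝ => if (-1 ≤ x ∧ x ≤ 1 ∧ y ≤ 1 - x) then x * max (2 - x + y) 0 else 0)
        = fun _ => 0 := by
      funext y
      rw [if_neg (fun hc => hx ⟨hc.1, hc.2.1⟩)]
    rw [heq, integral_zero, Set.indicator_of_notMem (fun hmem => hx (mem_Icc.1 hmem))]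

lemma int_T3 : (∫ p in T3, (p.1 : ℝ)) = -4 := by
  rw [← integral_indicator T3_meas]
  have hint : Integrable (Set.indicator T3 (fun p : ℝ×ℝ×ℝ => p.1)) :=
    (integrable_indicator_iff T3_meas).2
      (continuous_fst.continuousOn.integrableOn_compact T3_compact)
  rw [Measure.volume_eq_prod, integral_prod _ ((Measure.volume_eq_prod ℝ (ℝ×ℝ)) ▸ hint)]
  simp_rw [inner_int]
  rw [integral_indicator measurableSet_Icc, integral_Icc_eq_integral_Ioc,
    ← intervalIntegral.integral_of_le (by norm_num : (-1:ℝ) ≤ 1)]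
  have hrw : ∀ t : ℝ, t * (3 - 2*t)^2 / 2 = (9/2) * t + (-6) * t^2 + 2 * t^3 :=
    fun t => by ring
  simp_rw [hrw]
  rw [intervalIntegral.integral_add (by apply Continuous.intervalIntegrable; continuity)
      (by apply Continuous.intervalIntegrable; continuity),
    intervalIntegral.integral_add (by apply Continuous.intervalIntegrable; continuity)
      (by apply Continuous.intervalIntegrable; continuity),
    intervalIntegral.integral_const_mul, intervalIntegral.integral_const_mul,
    intervalIntegral.integral_const_mul, integral_id, integral_pow, integral_pow]
  norm_num

lemma volT3_pos : 0 < volume T3 := by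
  have hsub : Icc (-4⁻¹:ℝ) 4⁻¹ ×ˢ (Icc (-4⁻¹:ℝ) 4⁻¹ ×ˢ Icc (-4⁻¹:ℝ) 4⁻¹) ⊆ T3 := by
    rintro ⟨x,y,z⟩ hmem
    simp only [Set.mem_prod, Set.mem_Icc] at hmem
    obtain ⟨⟨a1,a2⟩,⟨b1,b2⟩,⟨c1,c2⟩⟩ := hmem
    exact ⟨by linarith, by linarith, by linarith, by linarith, by linarith⟩
  have hbox : volume (Icc (-4⁻¹:ℝ) 4⁻¹ ×ˢ (Icc (-4⁻¹:ℝ) 4⁻¹ ×ˢ Icc (-4⁻¹:ℝ) 4⁻¹))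
      = ENNReal.ofReal (2⁻¹) * (ENNReal.ofReal (2⁻¹) * ENNReal.ofReal (2⁻¹)) := by
    rw [Measure.volume_eq_prod, Measure.prod_prod, Measure.volume_eq_prod, Measure.prod_prod,
      Real.volume_Icc]
    norm_num
  refine lt_of_lt_of_le ?_ (measure_mono hsub)
  rw [hbox]
  have h2 : ENNReal.ofReal (2⁻¹) ≠ 0 := (ENNReal.ofReal_pos.2 (by norm_num)).ne'
  exact ENNReal.mul_pos h2 (ENNReal.mul_pos h2 h2).ne'

noncomputable def e3 : (Fin 3 → ℝ) ≃ᵐ ℝ × (ℝ × ℝ) :=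
  (MeasurableEquiv.piFinSuccAbove (fun _ => ℝ) 0).trans
    ((MeasurableEquiv.refl ℝ).prodCongr (MeasurableEquiv.finTwoArrow))

lemma e3_apply (x : Fin 3 → ℝ) : e3 x = (x 0, (x 1, x 2)) := by
  simp [e3, MeasurableEquiv.piFinSuccAbove, MeasurableEquiv.finTwoArrow,
    MeasurableEquiv.prodCongr, MeasurableEquiv.piFinTwo, Fin.tail]

lemma e3_mp : MeasurePreserving e3 :=
  ((MeasurePreserving.id volume).prod (volume_preserving_finTwoArrow ℝ)).comp
    (volume_preserving_piFinSuccAbove (fun _ : Fin 3 => ℝ) 0)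

lemma Sreg_preimage : Sreg = e3 ⁻¹' T3 := by
  ext x
  simp [Sreg, T3, e3_apply, and_assoc]

theorem stmt15
    (Pstar : Set (Fin 3 → ℝ))
    (hPstar : Pstar = convexHull ℝ
      ({![1, 0, 0], ![1, -1, 0], ![1, 0, -1],
        ![-1, 2, 2], ![-1, -3, 2], ![-1, 2, -3]} : Set (Fin 3 → ℝ))) :
    (∫ y in Pstar, y 0) / (volume Pstar).toReal < 0 := by
  rw [hPstar, hull_eq, Sreg_preimage]
  have hvol : volume (e3 ⁻¹' T3) = volume T3 := e3_mp.measure_preimage T3_meas.nullMeasurableSet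
  have hint : (∫ y in e3 ⁻¹' T3, y 0) = ∫ p in T3, p.1 := by
    have := e3_mp.setIntegral_preimage_emb e3.measurableEmbedding (fun p : ℝ × ℝ × ℝ => p.1) T3
    rw [← this]
    refine setIntegral_congr_fun (T3_meas.preimage e3.measurable) (fun y _ => ?_)
    rw [e3_apply]
  rw [hint, int_T3, hvol]
  apply div_neg_of_neg_of_pos (by norm_num)
  exact ENNReal.toReal_pos volT3_pos.ne' T3_compact.measure_lt_top.ne
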